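/- Let A be a sequence of n ≥ 1 real numbers and define OMCS(A,i) as i ⊖ j* where j* is the largest j ∈ {0,...,n-1} such that sum(A⟨(i ⊖ j)..i⟩) = MCS(A,i) (⊖ being subtraction mod n). Then sum(A⟨OMCS(A,i)..i⟩) = MCS(A,i); moreover, if OMCS(A,i) ≠ i ⊕ 1 (addition mod n), then every nonempty suffix of the circular subsequence A⟨(i ⊕ 1)..(OMCS(A,i) ⊖ 1)⟩ has negative sum. -/

import Mathlib

noncomputable section

/-- Sum of the contiguous subsequence A[j..i]. -/
def seg (A : ℕ → ℝ) (j i : ℕ) : ℝ := ∑ t ∈ Finset.Icc j i, A t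

/-- Maximal sum at element i: max over j ≤ i of sum A[j..i]. -/
def MS (A : ℕ → ℝ) (i : ℕ) : ℝ :=
  (Finset.range (i+1)).sup' (Finset.nonempty_range_iff.mpr (Nat.succ_ne_zero i))
    (fun j => seg A j i)

/-- Maximal sum of a contiguous, possibly empty, subsequence of A[0..n-1]. -/
def maxsum (A : ℕ → ℝ) (n : ℕ) : ℝ :=
  Finset.fold max 0 (fun q => seg A q.1 q.2)
    (Finset.filter (fun q => q.1 ≤ q.2) ((Finset.range n) ×ˢ (Finset.range n)))

/-- Insertion of x between A[p-1] and A[p]. -/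
def ins (A : ℕ → ℝ) (p : ℕ) (x : ℝ) : ℕ → ℝ :=
  fun i => if i < p then A i else if i = p then x else A (i - 1)

/-- Sum of the circular subsequence A⟨j..i⟩ of a sequence of length n. -/
def circseg (A : ℕ → ℝ) (n j i : ℕ) : ℝ :=
  if j ≤ i then seg A j i else seg A j (n-1) + seg A 0 i

/-- Maximal circular sum at element i. -/
def MCS (A : ℕ → ℝ) (n i : ℕ) : ℝ :=
  if h : 0 < n then
    (Finset.range n).sup' (Finset.nonempty_range_iff.mpr h.ne')
      (fun j => circseg A n j i)
  else 0

/-- Maximal circular sum of a possibly empty circular subsequence. -/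
def mcs (A : ℕ → ℝ) (n : ℕ) : ℝ :=
  Finset.fold max 0 (fun q => circseg A n q.1 q.2)
    ((Finset.range n) ×ˢ (Finset.range n))

/-- OMCS A n i = i ⊖ j*, where j* is the largest j with sum A⟨(i⊖j)..i⟩ = MCS A n i. -/
def OMCS (A : ℕ → ℝ) (n i : ℕ) : ℕ :=
  (i + n - ((Finset.filter
      (fun j => circseg A n ((i + n - j) % n) i = MCS A n i)
      (Finset.range n)).max.getD 0)) % n

/-- h belongs to the circular range from a to b (indices mod n). -/
def inCircRange (n a b h : ℕ) : Prop :=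
  (a ≤ b ∧ a ≤ h ∧ h ≤ b) ∨ (b < a ∧ ((a ≤ h ∧ h < n) ∨ h ≤ b))

/-- The (noncircular) interval partition of A into L intervals A[α i .. β i]. -/
def IntervalPartition (A : ℕ → ℝ) (n L : ℕ) (α β : ℕ → ℕ) : Prop :=
  0 < L ∧ 0 < n ∧ α 0 = 0 ∧ β (L-1) = n-1 ∧
  (∀ i, i + 1 < L → α (i+1) = β i + 1) ∧
  (∀ i, i < L → α i ≤ β i) ∧
  (∀ i, i < L → ∀ j, α i ≤ j → j ≤ β i →
     (j ≠ β i → 0 ≤ MS A j) ∧ (j = β i → i < L - 1 → MS A j < 0))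

lemma mod_sub_eq (n i j : ℕ) (hn : 0 < n) (hi : i < n) (hj : j < n) :
    (i + n - j) % n = if j ≤ i then i - j else i + n - j := by
  split_ifs with h
  · have h2 : i + n - j = n + (i - j) := by omega
    rw [h2, Nat.add_mod_left, Nat.mod_eq_of_lt (by omega)]
  · exact Nat.mod_eq_of_lt (by omega)

lemma invol (n i x : ℕ) (hn : 0 < n) (hi : i < n) (hx : x < n) :
    (i + n - ((i + n - x) % n)) % n = x := by
  rw [mod_sub_eq n i x hn hi hx]
  split_ifs with h
  · rw [mod_sub_eq n i (i - x) hn hi (by omega)]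
    split_ifs with h2 <;> omega
  · rw [mod_sub_eq n i (i + n - x) hn hi (by omega)]
    split_ifs with h2 <;> omega

lemma circseg_rot (A : ℕ → ℝ) (n j i : ℕ) (hn : 0 < n) (hi : i < n) (hj : j < n) :
    circseg A n j i = ∑ t ∈ Finset.range ((i + n - j) % n + 1), A ((j + t) % n) := by
  rw [mod_sub_eq n i j hn hi hj]
  unfold circseg seg
  split_ifs with h
  · rw [← Finset.Ico_add_one_right_eq_Icc, Finset.sum_Ico_eq_sum_range]
    have h2 : i + 1 - j = i - j + 1 := by omega
    rw [h2]
    refine Finset.sum_congr rfl fun t ht => ?_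
    rw [Nat.mod_eq_of_lt (by simp only [Finset.mem_range] at ht; omega)]
  · have eq1 : ∑ t ∈ Finset.Icc j (n-1), A t
        = ∑ t ∈ Finset.Ico 0 (n - j), A ((j + t) % n) := by
      rw [← Finset.Ico_add_one_right_eq_Icc, Finset.sum_Ico_eq_sum_range]
      have h2 : n - 1 + 1 - j = n - j := by omega
      rw [h2, ← Finset.range_eq_Ico]
      refine Finset.sum_congr rfl fun t ht => ?_
      rw [Nat.mod_eq_of_lt (by simp only [Finset.mem_range] at ht; omega)]
    have eq2 : ∑ t ∈ Finset.Icc 0 i, A t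
        = ∑ t ∈ Finset.Ico (n - j) (i + n - j + 1), A ((j + t) % n) := by
      rw [← Finset.Ico_add_one_right_eq_Icc, Finset.sum_Ico_eq_sum_range, Finset.sum_Ico_eq_sum_range]
      have h2 : i + n - j + 1 - (n - j) = i + 1 - 0 := by omega
      rw [h2]
      refine Finset.sum_congr rfl fun t ht => ?_
      have h3 : j + (n - j + t) = n + t := by omega
      rw [h3, Nat.add_mod_left, Nat.mod_eq_of_lt (by simp only [Finset.mem_range] at ht; omega)]
      norm_num
    rw [eq1, eq2, Finset.range_eq_Ico,
      Finset.sum_Ico_consecutive _ (Nat.zero_le (n - j)) (by omega : n - j ≤ i + n - j + 1)]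
theorem stmt12 (A : ℕ → ℝ) (n : ℕ) (hn : 1 ≤ n) (i : ℕ) (hi : i < n) :
    circseg A n (OMCS A n i) i = MCS A n i ∧
    (OMCS A n i ≠ (i + 1) % n →
      ∀ h, inCircRange n ((i + 1) % n) ((OMCS A n i + n - 1) % n) h →
        circseg A n h ((OMCS A n i + n - 1) % n) < 0) := by
  have hn0 : 0 < n := hn
  set F := Finset.filter (fun j => circseg A n ((i + n - j) % n) i = MCS A n i)
      (Finset.range n) with hF
  have hMCS : MCS A n i = (Finset.range n).sup'
      (Finset.nonempty_range_iff.mpr hn0.ne') (fun j => circseg A n j i) := by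
    rw [MCS, dif_pos hn0]
  have hle : ∀ x < n, circseg A n x i ≤ MCS A n i := by
    intro x hx
    rw [hMCS]
    exact Finset.le_sup' (fun j => circseg A n j i) (Finset.mem_range.mpr hx)
  have hFne : F.Nonempty := by
    obtain ⟨j0, hj0m, hj0⟩ := Finset.exists_mem_eq_sup'
      (Finset.nonempty_range_iff.mpr hn0.ne') (fun j => circseg A n j i)
    refine ⟨(i + n - j0) % n, ?_⟩
    rw [hF, Finset.mem_filter]
    refine ⟨Finset.mem_range.mpr (Nat.mod_lt _ hn0), ?_⟩
    rw [invol n i j0 hn0 hi (Finset.mem_range.mp hj0m), hMCS, hj0]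
  set J := F.max.getD 0 with hJ
  have hJ' : J = F.max' hFne := by
    rw [hJ, ← Finset.coe_max' hFne]; rfl
  have hJF : J ∈ F := hJ' ▸ Finset.max'_mem F hFne
  have hJn : J < n := Finset.mem_range.mp (Finset.mem_filter.mp hJF).1
  have hJmax : ∀ j' ∈ F, j' ≤ J := fun j' hj' => hJ' ▸ Finset.le_max' F j' hj'
  set p := (i + n - J) % n with hp
  have hOM : OMCS A n i = p := rfl
  have part1 : circseg A n p i = MCS A n i := (Finset.mem_filter.mp hJF).2
  refine ⟨by rw [hOM]; exact part1, ?_⟩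
  intro hne h hcr
  rw [hOM] at hne hcr ⊢
  have hpn : p < n := Nat.mod_lt _ hn0
  have hJlt : J < n - 1 := by
    rcases Nat.lt_or_ge J (n - 1) with h1 | h1
    · exact h1
    · exfalso
      apply hne
      have h2 : J = n - 1 := by omega
      rw [hp, h2]
      congr 1
      omega
  have hn2 : 2 ≤ n := by omega
  set a := (i + 1) % n with hadef
  set b := (p + n - 1) % n with hbdef
  have hbn : b < n := Nat.mod_lt _ hn0
  have hagood : a = if i + 1 = n then 0 else i + 1 := by
    rw [hadef]
    split_ifs with h1
    · rw [h1, Nat.mod_self]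
    · exact Nat.mod_eq_of_lt (by omega)
  have hpe : p = if J ≤ i then i - J else i + n - J := by
    rw [hp]; exact mod_sub_eq n i J hn0 hi hJn
  have hbe : b = if 1 ≤ p then p - 1 else p + n - 1 := by
    rw [hbdef]; exact mod_sub_eq n p 1 hn0 hpn (by omega)
  unfold inCircRange at hcr
  rcases hcr with ⟨h1, h2, h3⟩ | ⟨h1, (⟨h2, h3⟩ | h2)⟩ <;>
    [skip; skip; skip] -- keep 3 goals? no
  all_goals {
    have hhn : h < n := by split_ifs at hagood hpe hbe <;> omega
    set j' := (i + n - h) % n with hj'def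
    have hj'n : j' < n := Nat.mod_lt _ hn0
    have hj'e : j' = if h ≤ i then i - h else i + n - h := by
      rw [hj'def]; exact mod_sub_eq n i h hn0 hi hhn
    have hstart : (i + n - j') % n = h := by
      rw [hj'def]; exact invol n i h hn0 hi hhn
    have hkey : J + 1 ≤ j' := by
      split_ifs at hagood hpe hbe hj'e <;> omega
    have hlen : (b + n - h) % n = j' - (J + 1) := by
      rw [mod_sub_eq n b h hn0 hbn hhn]
      split_ifs at hagood hpe hbe hj'e ⊢ <;> omega
    have e1 := circseg_rot A n h i hn0 hi hhn
    rw [← hj'def] at e1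
    have e2 := circseg_rot A n p i hn0 hi hpn
    have hip : (i + n - p) % n = J := by
      rw [hp]; exact invol n i J hn0 hi hJn
    rw [hip] at e2
    have e3 := circseg_rot A n h b hn0 hbn hhn
    rw [hlen] at e3
    have h4 : j' - (J + 1) + 1 = j' - J := by omega
    rw [h4] at e3
    have esplit : ∑ t ∈ Finset.range (j' + 1), A ((h + t) % n)
        = (∑ t ∈ Finset.range (j' - J), A ((h + t) % n))
          + ∑ s ∈ Finset.range (J + 1), A ((p + s) % n) := by
      rw [Finset.range_eq_Ico, ← Finset.sum_Ico_consecutive (fun t => A ((h + t) % n))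
        (Nat.zero_le (j' - J)) (by omega : j' - J ≤ j' + 1)]
      simp only [Finset.range_eq_Ico]
      congr 1
      rw [Finset.sum_Ico_eq_sum_range, Finset.sum_Ico_eq_sum_range]
      have h5 : j' + 1 - (j' - J) = J + 1 - 0 := by omega
      rw [h5]
      refine Finset.sum_congr rfl fun s _ => ?_
      rw [Nat.zero_add]
      congr 1
      calc (h + (j' - J + s)) % n
            = ((i + n - j') % n + (j' - J + s)) % n := by rw [hstart]
          _ = ((i + n - j') + (j' - J + s)) % n := Nat.mod_add_mod _ _ _
          _ = ((i + n - J) + s) % n := by congr 1; omega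
          _ = ((i + n - J) % n + s) % n := (Nat.mod_add_mod _ _ _).symm
          _ = (p + s) % n := by rw [← hp]
    have hlt : circseg A n h i < MCS A n i := by
      refine lt_of_le_of_ne (hle h hhn) fun heq => ?_
      have hjF : j' ∈ F := by
        rw [hF, Finset.mem_filter]
        exact ⟨Finset.mem_range.mpr hj'n, by rw [hstart]; exact heq⟩
      have := hJmax j' hjF
      omega
    have final : circseg A n h b = circseg A n h i - MCS A n i := by
      rw [e1, e3, esplit, ← part1, e2]; ring
    rw [final]
    linarith
  }
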